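/- Let f : ℝ → ℝ be a rational function f(t) = p(t)/q(t) with deg p ≤ deg q − 2, where q has no real roots and exactly one pair of conjugate complex roots (each possibly with multiplicity). Then f has a rational antiderivative if and only if ∫_{−∞}^{∞} f(t) dt = 0. -/

import Mathlib

open MeasureTheory Polynomial

open Filter

lemma compneg_eval (g : Polynomial ℝ) (t : ℝ) : (g.comp (-X)).eval t = g.eval (-t) := by
  simp [Polynomial.eval_comp]

lemma compneg_compneg (g : Polynomial ℝ) : (g.comp (-X)).comp (-X) = g := by
  simp [Polynomial.comp_assoc]

lemma compneg_ne_zero {g : Polynomial ℝ} (hg : g ≠ 0) : g.comp (-X) ≠ 0 := by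
  intro h
  apply hg
  have := congrArg (fun r => Polynomial.comp r (-X)) h
  simpa [compneg_compneg] using this

lemma compneg_natDegree (g : Polynomial ℝ) : (g.comp (-X)).natDegree = g.natDegree := by
  rw [Polynomial.natDegree_comp]
  simp

lemma compneg_degree (g : Polynomial ℝ) : (g.comp (-X)).degree = g.degree := by
  rcases eq_or_ne g 0 with rfl | hg
  · simp
  · rw [Polynomial.degree_eq_natDegree (compneg_ne_zero hg), Polynomial.degree_eq_natDegree hg,
      compneg_natDegree]

lemma compneg_leadingCoeff (g : Polynomial ℝ) :
    (g.comp (-X)).leadingCoeff = g.leadingCoeff * (-1) ^ g.natDegree := by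
  rw [Polynomial.leadingCoeff_comp (by simp)]
  simp

/-- a proper rational function tends to the same limit at both infinities -/
lemma tendsto_both (g h : Polynomial ℝ) (hh : h ≠ 0) (hle : g.degree ≤ h.degree) :
    ∃ L, Tendsto (fun t => g.eval t / h.eval t) atTop (nhds L) ∧
      Tendsto (fun t => g.eval t / h.eval t) atBot (nhds L) := by
  have hbot : ∀ (L : ℝ), Tendsto (fun t => (g.comp (-X)).eval t / (h.comp (-X)).eval t)
      atTop (nhds L) → Tendsto (fun t => g.eval t / h.eval t) atBot (nhds L) := by
    intro L hL
    have : Tendsto ((fun t => g.eval (-t) / h.eval (-t)) ∘ (fun t : ℝ => -t)) atBot (nhds L) := by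
      apply Tendsto.comp _ tendsto_neg_atBot_atTop
      simpa [compneg_eval] using hL
    simpa [Function.comp_def] using this
  rcases lt_or_eq_of_le hle with hlt | heq
  · refine ⟨0, Polynomial.div_tendsto_zero_of_degree_lt g h hlt, hbot 0 ?_⟩
    exact Polynomial.div_tendsto_zero_of_degree_lt _ _ (by rw [compneg_degree, compneg_degree]; exact hlt)
  · have hg : g ≠ 0 := by
      intro h0
      rw [h0, Polynomial.degree_zero] at heq
      exact hh (Polynomial.degree_eq_bot.mp heq.symm)
    refine ⟨g.leadingCoeff / h.leadingCoeff,
      Polynomial.div_tendsto_leadingCoeff_div_of_degree_eq g h heq, hbot _ ?_⟩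
    have h1 := Polynomial.div_tendsto_leadingCoeff_div_of_degree_eq (g.comp (-X)) (h.comp (-X))
      (by rw [compneg_degree, compneg_degree]; exact heq)
    have hnd : g.natDegree = h.natDegree :=
      Polynomial.natDegree_eq_of_degree_eq heq
    have : (g.comp (-X)).leadingCoeff / (h.comp (-X)).leadingCoeff
        = g.leadingCoeff / h.leadingCoeff := by
      rw [compneg_leadingCoeff, compneg_leadingCoeff, hnd]
      have hh' : h.leadingCoeff ≠ 0 := Polynomial.leadingCoeff_ne_zero.mpr hh
      have : ((-1 : ℝ)) ^ h.natDegree ≠ 0 := by positivity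
      field_simp
    rwa [this] at h1

lemma bdd_of_tendsto (W : ℝ → ℝ) (hW : Continuous W) (L₁ L₂ : ℝ)
    (h1 : Tendsto W atTop (nhds L₁)) (h2 : Tendsto W atBot (nhds L₂)) :
    ∃ M : ℝ, 0 ≤ M ∧ ∀ t, |W t| ≤ M := by
  have e1 : ∀ᶠ t in atTop, |W t| ≤ |L₁| + 1 := by
    have := h1.abs
    filter_upwards [this.eventually (eventually_le_nhds (by linarith [abs_nonneg L₁] : |L₁| < |L₁| + 1))] with t ht using ht
  have e2 : ∀ᶠ t in atBot, |W t| ≤ |L₂| + 1 := by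
    have := h2.abs
    filter_upwards [this.eventually (eventually_le_nhds (by linarith [abs_nonneg L₂] : |L₂| < |L₂| + 1))] with t ht using ht
  obtain ⟨A, hA⟩ := eventually_atTop.mp e1
  obtain ⟨B, hB⟩ := eventually_atBot.mp e2
  obtain ⟨C, hC⟩ := (isCompact_Icc (a := B) (b := A)).exists_bound_of_continuousOn hW.continuousOn
  refine ⟨max (max (|L₁|+1) (|L₂|+1)) (max C 0), le_trans (le_max_right _ _) (le_max_right _ _), fun t => ?_⟩
  rcases le_total t B with htB | htB
  · exact le_trans (hB t htB) (le_trans (le_max_right _ _) (le_max_left _ _))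
  rcases le_total A t with htA | htA
  · exact le_trans (hA t htA) (le_trans (le_max_left _ _) (le_max_left _ _))
  · have := hC t ⟨htB, htA⟩
    rw [Real.norm_eq_abs] at this
    exact le_trans this (le_trans (le_max_left _ _) (le_max_right _ _))

lemma integrable_rat (r s : Polynomial ℝ) (hs : ∀ t, s.eval t ≠ 0)
    (hdeg : r.natDegree + 2 ≤ s.natDegree) :
    Integrable (fun t => r.eval t / s.eval t) := by
  have hs0 : s ≠ 0 := fun h0 => hs 0 (by simp [h0])
  rcases eq_or_ne r 0 with rfl | hr0
  · simpa using integrable_zero _ ℝ (volume : Measure ℝ)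
  have hx2 : (X ^ 2 + 1 : Polynomial ℝ) ≠ 0 := by
    intro h
    simpa using congrArg (fun p => Polynomial.eval (0:ℝ) p) h
  set W : ℝ → ℝ := fun t => ((X ^ 2 + 1 : Polynomial ℝ) * r).eval t / s.eval t with hWdef
  have hdegW : ((X ^ 2 + 1 : Polynomial ℝ) * r).degree ≤ s.degree := by
    have hne : ((X ^ 2 + 1 : Polynomial ℝ) * r) ≠ 0 := mul_ne_zero hx2 hr0
    rw [Polynomial.degree_eq_natDegree hne, Polynomial.degree_eq_natDegree hs0]
    have : ((X ^ 2 + 1 : Polynomial ℝ) * r).natDegree = 2 + r.natDegree := by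
      rw [Polynomial.natDegree_mul hx2 hr0]
      congr 1
      compute_degree!
    rw [this]
    exact_mod_cast by omega
  obtain ⟨L, hLt, hLb⟩ := tendsto_both _ _ hs0 hdegW
  have hWc : Continuous W := by
    apply Continuous.div (Polynomial.continuous _) (Polynomial.continuous _) hs
  obtain ⟨M, hM0, hM⟩ := bdd_of_tendsto W hWc L L hLt hLb
  have hbound : ∀ t : ℝ, ‖r.eval t / s.eval t‖ ≤ ‖M * (1 + t ^ 2)⁻¹‖ := by
    intro t
    have h1 : (0:ℝ) < 1 + t ^ 2 := by positivity
    have hWt : W t = (t ^ 2 + 1) * (r.eval t / s.eval t) := by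
      simp [hWdef, mul_div_assoc]
    have h2 : |r.eval t / s.eval t| * (1 + t ^ 2) ≤ M := by
      calc |r.eval t / s.eval t| * (1 + t ^ 2) = (t ^ 2 + 1) * |r.eval t / s.eval t| := by ring
      _ = |W t| := by rw [hWt, abs_mul, abs_of_pos (by positivity : (0:ℝ) < t ^ 2 + 1)]
      _ ≤ M := hM t
    have h3 : ‖M * (1 + t ^ 2)⁻¹‖ = M * (1 + t ^ 2)⁻¹ := by
      rw [Real.norm_eq_abs, abs_of_nonneg (by positivity)]
    rw [h3, Real.norm_eq_abs, ← div_eq_mul_inv, le_div_iff₀ h1]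
    exact h2
  exact (((integrable_inv_one_add_sq).const_mul M).mono
    (Continuous.aestronglyMeasurable (by exact Continuous.div (Polynomial.continuous _) (Polynomial.continuous _) hs))
    (Filter.Eventually.of_forall hbound))
lemma integral_deriv_rat_zero (g h : Polynomial ℝ) (hh : ∀ t, h.eval t ≠ 0)
    (φ : ℝ → ℝ) (hφc : Continuous φ) (hφi : Integrable φ)
    (hd : ∀ t, HasDerivAt (fun s => g.eval s / h.eval s) (φ t) t) :
    (∫ t, φ t) = 0 := by
  set G : ℝ → ℝ := fun s => g.eval s / h.eval s with hG
  have hh0 : h ≠ 0 := fun h0 => hh 0 (by simp [h0])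
  have key : ∀ t : ℝ, G t = G 0 + ∫ s in (0:ℝ)..t, φ s := by
    intro t
    have := intervalIntegral.integral_eq_sub_of_hasDerivAt (f := G) (f' := φ)
      (fun x _ => hd x) (hφc.intervalIntegrable 0 t)
    rw [this]; ring
  have T1 : Tendsto G atTop (nhds (G 0 + ∫ s in Set.Ioi (0:ℝ), φ s)) := by
    exact (Tendsto.const_add (G 0)
      (intervalIntegral_tendsto_integral_Ioi 0 hφi.integrableOn tendsto_id)).congr
      (fun t => (key t).symm)
  have T2 : Tendsto G atBot (nhds (G 0 - ∫ s in Set.Iic (0:ℝ), φ s)) := by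
    have key2 : ∀ t : ℝ, G t = G 0 - ∫ s in t..(0:ℝ), φ s := by
      intro t
      rw [key t, intervalIntegral.integral_symm]
      ring
    exact (Tendsto.const_sub (G 0)
      (intervalIntegral_tendsto_integral_Iic 0 hφi.integrableOn tendsto_id)).congr
      (fun t => (key2 t).symm)
  have hdeg : g.degree ≤ h.degree := by
    by_contra hgt
    push_neg at hgt
    exact not_tendsto_nhds_of_tendsto_atTop
      (Polynomial.abs_div_tendsto_atTop_of_degree_gt g h hgt hh0) _ T1.abs
  obtain ⟨L, hLt, hLb⟩ := tendsto_both g h hh0 hdeg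
  have := integral_of_hasDerivAt_of_tendsto hd hφi hLb hLt
  rw [this, sub_self]
lemma decomp (Q : Polynomial ℝ) (hQ2 : Q.natDegree = 2) (hQ0 : Q ≠ 0) (k : ℕ) (hk : 1 ≤ k) :
    ∀ n : ℕ, ∀ p : Polynomial ℝ, p.natDegree ≤ n → p.natDegree + 2 ≤ 2 * k →
    ∃ (g : Polynomial ℝ) (μ : ℝ), g.degree < ((2 * k - 2 : ℕ) : WithBot ℕ) ∧
      p = derivative g * Q - C ((k : ℝ) - 1) * (g * derivative Q) + C μ := by
  have ha : Q.coeff 2 ≠ 0 := by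
    rw [← hQ2, Polynomial.coeff_natDegree]
    exact Polynomial.leadingCoeff_ne_zero.mpr hQ0
  set a := Q.coeff 2 with hadef
  intro n
  induction n with
  | zero =>
    intro p hpn _
    refine ⟨0, p.coeff 0, by
      rw [Polynomial.degree_zero]; exact_mod_cast WithBot.bot_lt_coe (2 * k - 2), ?_⟩
    simp [← Polynomial.eq_C_of_natDegree_le_zero hpn]
  | succ n ih =>
    intro p hpn hpk
    rcases le_or_gt p.natDegree n with hle | hgt
    · exact ih p hle hpk
    have hm : p.natDegree = n + 1 := le_antisymm hpn hgt
    set κ' : ℝ := (k : ℝ) - 1 with hκ'def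
    set κ : ℝ := (n : ℝ) - 2 * κ' with hκdef
    have hκ : κ ≠ 0 := by
      have h3 : n + 3 ≤ 2 * k := by omega
      have : (n : ℝ) + 3 ≤ 2 * (k : ℝ) := by exact_mod_cast h3
      rw [hκdef, hκ'def]
      intro h0
      nlinarith
    set c₁ : ℝ := p.leadingCoeff / (a * κ) with hc₁def
    set g₀ : Polynomial ℝ := C c₁ * X ^ n with hg₀def
    set v : Polynomial ℝ := derivative g₀ * Q - C κ' * (g₀ * derivative Q) with hvdef
    -- coefficient computations
    have hQ'1 : (derivative Q).coeff 1 = 2 * a := by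
      rw [Polynomial.coeff_derivative]; push_cast; ring
    have hc2 : (C κ' * (g₀ * derivative Q)).coeff (n + 1) = κ' * (c₁ * (2 * a)) := by
      have : g₀ * derivative Q = C c₁ * (X ^ n * derivative Q) := by rw [hg₀def]; ring
      rw [Polynomial.coeff_C_mul, this, Polynomial.coeff_C_mul, show n + 1 = 1 + n by omega,
        Polynomial.coeff_X_pow_mul, hQ'1]
    have hc1 : (derivative g₀ * Q).coeff (n + 1) = c₁ * n * a := by
      rw [hg₀def, Polynomial.derivative_C_mul_X_pow]
      rcases Nat.eq_zero_or_pos n with rfl | hn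
      · simp
      · obtain ⟨jj, rfl⟩ : ∃ jj, n = jj + 1 := ⟨n - 1, by omega⟩
        have : C (c₁ * ((jj+1 : ℕ) : ℝ)) * X ^ (jj + 1 - 1) * Q
            = C (c₁ * ((jj+1 : ℕ) : ℝ)) * (X ^ jj * Q) := by
          rw [show jj + 1 - 1 = jj from rfl]; ring
        rw [this, Polynomial.coeff_C_mul, show jj + 1 + 1 = 2 + jj by omega,
          Polynomial.coeff_X_pow_mul]
    have hvc : v.coeff (n + 1) = p.leadingCoeff := by
      rw [hvdef, Polynomial.coeff_sub, hc1, hc2, hc₁def]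
      field_simp
      ring
    -- degree bound for v
    have hvd : v.natDegree ≤ n + 1 := by
      rw [hvdef]
      apply le_trans (Polynomial.natDegree_sub_le _ _)
      apply max_le
      · rcases Nat.eq_zero_or_pos n with rfl | hn
        · simp [hg₀def]
        · apply le_trans (Polynomial.natDegree_mul_le)
          have h1 : (derivative g₀).natDegree ≤ n - 1 := by
            rw [hg₀def, Polynomial.derivative_C_mul_X_pow]
            exact Polynomial.natDegree_C_mul_X_pow_le _ _
          omega
      · apply le_trans (Polynomial.natDegree_mul_le)
        have h2 : (g₀ * derivative Q).natDegree ≤ n + 1 := by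
          apply le_trans (Polynomial.natDegree_mul_le)
          have : (derivative Q).natDegree ≤ 1 := by
            have := Polynomial.natDegree_derivative_le Q
            omega
          have : g₀.natDegree ≤ n := by
            rw [hg₀def]
            exact Polynomial.natDegree_C_mul_X_pow_le _ _
          omega
        simpa using h2
    -- the remainder
    set r : Polynomial ℝ := p - v with hrdef
    have hrn : r.natDegree ≤ n := by
      rw [Polynomial.natDegree_le_iff_coeff_eq_zero]
      intro i hi
      rcases eq_or_lt_of_le (Nat.succ_le_of_lt hi) with heq | hlt
      · have hpc : p.coeff (n + 1) = p.leadingCoeff := by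
          rw [← hm]; exact Polynomial.coeff_natDegree
        rw [hrdef, Polynomial.coeff_sub, ← heq, hvc, hpc, sub_self]
      · rw [hrdef, Polynomial.coeff_sub,
          Polynomial.coeff_eq_zero_of_natDegree_lt (by omega),
          Polynomial.coeff_eq_zero_of_natDegree_lt (by omega), sub_self]
    obtain ⟨g₁, μ, hg₁d, hg₁⟩ := ih r hrn (by omega)
    refine ⟨g₀ + g₁, μ, ?_, ?_⟩
    · apply lt_of_le_of_lt (Polynomial.degree_add_le _ _)
      apply max_lt _ hg₁d
      apply lt_of_le_of_lt (Polynomial.degree_C_mul_X_pow_le _ _)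
      exact_mod_cast by omega
    · have hp : p = v + r := by rw [hrdef]; ring
      rw [hp, hg₁, hvdef]
      rw [Polynomial.derivative_add]
      ring
lemma hasDerivAt_ratio (g h : Polynomial ℝ) (t : ℝ) (ht : h.eval t ≠ 0) :
    HasDerivAt (fun s => g.eval s / h.eval s)
      ((derivative g * h - g * derivative h).eval t / (h.eval t) ^ 2) t := by
  have := (g.hasDerivAt t).div (h.hasDerivAt t) ht
  simpa [Polynomial.eval_mul, Polynomial.eval_sub, mul_comm, Pi.div_def] using this

lemma sign_const (q : Polynomial ℝ) (hq : ∀ t : ℝ, q.eval t ≠ 0) :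
    (∀ t : ℝ, 0 < q.eval t) ∨ (∀ t : ℝ, q.eval t < 0) := by
  rcases lt_or_gt_of_ne (hq 0) with h0 | h0
  · right
    intro t
    by_contra htpos
    push_neg at htpos
    have ht : 0 < q.eval t := lt_of_le_of_ne htpos (Ne.symm (hq t))
    have : (0:ℝ) ∈ Set.uIcc (q.eval t) (q.eval 0) := Set.mem_uIcc.mpr (Or.inr ⟨le_of_lt h0, le_of_lt ht⟩)
    obtain ⟨x, _, hx⟩ := intermediate_value_uIcc (Continuous.continuousOn (Polynomial.continuous q)) this
    exact hq x hx
  · left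
    intro t
    by_contra htneg
    push_neg at htneg
    have ht : q.eval t < 0 := lt_of_le_of_ne htneg (hq t)
    have : (0:ℝ) ∈ Set.uIcc (q.eval t) (q.eval 0) := Set.mem_uIcc.mpr (Or.inl ⟨le_of_lt ht, le_of_lt h0⟩)
    obtain ⟨x, _, hx⟩ := intermediate_value_uIcc (Continuous.continuousOn (Polynomial.continuous q)) this
    exact hq x hx

lemma integral_inv_ne_zero (q : Polynomial ℝ) (hq : ∀ t : ℝ, q.eval t ≠ 0)
    (hd : 2 ≤ q.natDegree) : (∫ t : ℝ, (q.eval t)⁻¹) ≠ 0 := by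
  have hint : Integrable (fun t => (q.eval t)⁻¹) := by
    apply (integrable_rat 1 q hq (by simpa using hd)).congr
    filter_upwards with t
    simp [one_div]
  rcases sign_const q hq with hpos | hneg
  · have : 0 < ∫ t : ℝ, (q.eval t)⁻¹ := by
      rw [MeasureTheory.integral_pos_iff_support_of_nonneg
        (fun t => le_of_lt (inv_pos.mpr (hpos t))) hint]
      have : Function.support (fun t : ℝ => (q.eval t)⁻¹) = Set.univ := by
        ext t; simp [Function.support, hq t]
      rw [this]
      simp
    exact ne_of_gt this
  · have hintneg : Integrable (fun t : ℝ => -(q.eval t)⁻¹) := hint.neg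
    have : 0 < ∫ t : ℝ, -(q.eval t)⁻¹ := by
      rw [MeasureTheory.integral_pos_iff_support_of_nonneg
        (fun t => by simpa using le_of_lt (inv_lt_zero.mpr (hneg t))) hintneg]
      have : Function.support (fun t : ℝ => -(q.eval t)⁻¹) = Set.univ := by
        ext t; simp [Function.support, hq t]
      rw [this]
      simp
    rw [MeasureTheory.integral_neg] at this
    intro h0
    rw [h0] at this
    simp at this
/-- Let f(t) = p(t)/q(t) be a rational function with deg p ≤ deg q − 2, where
q = c·Q^k has no real roots and exactly one pair of conjugate complex roots
(an irreducible real quadratic Q, possibly with multiplicity).  Then f has a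
rational antiderivative iff ∫_{−∞}^{∞} f(t) dt = 0. -/
theorem rational_antiderivative_iff_integral_zero
    (p q Q : Polynomial ℝ) (c : ℝ) (hc : c ≠ 0) (k : ℕ) (hk : 1 ≤ k)
    (hq : q = Polynomial.C c * Q ^ k)
    (hQdeg : Q.degree = 2) (hQirr : Irreducible Q)
    (hqroot : ∀ t : ℝ, q.eval t ≠ 0)
    (hdeg : p.natDegree + 2 ≤ q.natDegree) :
    (∃ g h : Polynomial ℝ, (∀ t : ℝ, h.eval t ≠ 0) ∧
        ∀ t : ℝ, HasDerivAt (fun s : ℝ => g.eval s / h.eval s)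
          (p.eval t / q.eval t) t) ↔
      (∫ t : ℝ, p.eval t / q.eval t) = 0 := by
  have hfc : Continuous (fun t : ℝ => p.eval t / q.eval t) :=
    Continuous.div (Polynomial.continuous _) (Polynomial.continuous _) hqroot
  have hfi : Integrable (fun t : ℝ => p.eval t / q.eval t) := integrable_rat p q hqroot hdeg
  constructor
  · rintro ⟨g, h, hh, hd⟩
    exact integral_deriv_rat_zero g h hh _ hfc hfi hd
  · intro hint
    obtain ⟨n, rfl⟩ : ∃ n, k = n + 1 := ⟨k - 1, by omega⟩
    have hQnat : Q.natDegree = 2 := Polynomial.natDegree_eq_of_degree_eq_some hQdeg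
    have hQ0 : Q ≠ 0 := fun h0 => by simp [h0] at hQdeg
    have hqnat : q.natDegree = 2 * (n + 1) := by
      rw [hq, Polynomial.natDegree_C_mul hc, Polynomial.natDegree_pow, hQnat]
      ring
    have hQe : ∀ t : ℝ, Q.eval t ≠ 0 := by
      intro t h0
      apply hqroot t
      rw [hq]
      simp [h0]
    obtain ⟨g, μ, hgdeg, hgid⟩ := decomp Q hQnat hQ0 (n + 1) (by omega) p.natDegree p le_rfl
      (by omega)
    have hcast : ((n + 1 : ℕ) : ℝ) - 1 = (n : ℝ) := by push_cast; ring
    rw [hcast] at hgid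
    set h : Polynomial ℝ := C c * Q ^ n with hhdef
    have hh : ∀ t : ℝ, h.eval t ≠ 0 := by
      intro t
      rw [hhdef]
      simp only [Polynomial.eval_mul, Polynomial.eval_C, Polynomial.eval_pow]
      exact mul_ne_zero hc (pow_ne_zero _ (hQe t))
    -- the key polynomial identity
    have key : (derivative g * h - g * derivative h) * q
        = (derivative g * Q - C (n : ℝ) * (g * derivative Q)) * h ^ 2 := by
      have hdh : derivative h = C c * (C ((n : ℕ) : ℝ) * Q ^ (n - 1) * derivative Q) := by
        rw [hhdef, Polynomial.derivative_C_mul, Polynomial.derivative_pow]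
      rcases Nat.eq_zero_or_pos n with rfl | hn
      · rw [hq, hhdef, hdh]
        simp only [Nat.cast_zero, Polynomial.C_0, pow_zero, mul_one, zero_mul, mul_zero,
          zero_add, pow_one]
        ring
      · obtain ⟨m, rfl⟩ : ∃ m, n = m + 1 := ⟨n - 1, by omega⟩
        rw [hq, hhdef, hdh, show m + 1 - 1 = m from rfl]
        ring
    -- pointwise derivative identity
    have hD : ∀ t : ℝ, HasDerivAt (fun s : ℝ => g.eval s / h.eval s)
        ((p.eval t - μ) / q.eval t) t := by
      intro t
      have h1 := hasDerivAt_ratio g h t (hh t)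
      have e1 := congrArg (Polynomial.eval t) key
      have e2 : (p - C μ) = derivative g * Q - C (n : ℝ) * (g * derivative Q) := by
        rw [hgid]; ring
      rw [← e2] at e1
      simp only [Polynomial.eval_mul, Polynomial.eval_sub, Polynomial.eval_C,
        Polynomial.eval_pow] at e1
      have : (derivative g * h - g * derivative h).eval t / (h.eval t) ^ 2
          = (p.eval t - μ) / q.eval t := by
        rw [div_eq_div_iff (pow_ne_zero 2 (hh t)) (hqroot t)]
        simpa [Polynomial.eval_mul, Polynomial.eval_sub] using e1
      rwa [this] at h1
    -- the shifted function is integrable with integral zero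
    have hint2 : Integrable (fun t : ℝ => (p.eval t - μ) / q.eval t) := by
      apply (integrable_rat (p - C μ) q hqroot ?_).congr
      · filter_upwards with t; simp
      · have h1 := Polynomial.natDegree_sub_le p (C μ)
        rw [Polynomial.natDegree_C, max_eq_left (Nat.zero_le _)] at h1
        omega
    have hc2 : Continuous (fun t : ℝ => (p.eval t - μ) / q.eval t) :=
      Continuous.div ((Polynomial.continuous p).sub continuous_const) (Polynomial.continuous _) hqroot
    have hzero : (∫ t : ℝ, (p.eval t - μ) / q.eval t) = 0 :=
      integral_deriv_rat_zero g h hh _ hc2 hint2 hD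
    -- deduce μ = 0
    have hinv : Integrable (fun t : ℝ => μ * (q.eval t)⁻¹) := by
      apply ((integrable_rat (C μ) q hqroot (by rw [Polynomial.natDegree_C]; omega)).congr)
      filter_upwards with t
      simp [div_eq_mul_inv]
    have hsplit : (∫ t : ℝ, (p.eval t - μ) / q.eval t)
        = (∫ t : ℝ, p.eval t / q.eval t) - ∫ t : ℝ, μ * (q.eval t)⁻¹ := by
      rw [← MeasureTheory.integral_sub hfi hinv]
      congr 1
      funext t
      rw [sub_div, div_eq_mul_inv, div_eq_mul_inv]
    rw [hzero, hint, MeasureTheory.integral_const_mul] at hsplit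
    have hI : (∫ t : ℝ, (q.eval t)⁻¹) ≠ 0 :=
      integral_inv_ne_zero q hqroot (by omega)
    have hμ : μ = 0 := by
      rcases mul_eq_zero.mp (by linarith [hsplit] : μ * (∫ t : ℝ, (q.eval t)⁻¹) = 0) with h0 | h0
      · exact h0
      · exact absurd h0 hI
    refine ⟨g, h, hh, fun t => ?_⟩
    have := hD t
    rwa [hμ, sub_zero] at this
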